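/- For integers 1 \leq r \leq d and t \neq 0, 1 in a field, the identity t^{r(r-d)} (t^{d-r+2}; t)_r (1 - t^{d-2r+1}) / ((t;t)_r (1 - t^{d+1})) = \binom{d}{r}_{t^{-1}} - \binom{d}{r-1}_{t^{-1}} holds, where \binom{d}{r}_s = [d]_s!/([r]_s! [d-r]_s!) is the Gaussian binomial coefficient in base s. -/
import Mathlib

/-- The q-Pochhammer symbol `(x;t)_m = ∏_{i=0}^{m-1} (1 - x t^i)`. -/
noncomputable def qPoch {F : Type*} [Field F] (x t : F) (m : ℕ) : F :=
  ∏ i ∈ Finset.range m, (1 - x * t ^ i)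

/-- The s-factorial `[m]_s! = ∏_{j=1}^m (1-s^j)/(1-s)`. -/
noncomputable def qFact {F : Type*} [Field F] (s : F) (m : ℕ) : F :=
  ∏ j ∈ Finset.range m, (1 - s ^ (j + 1)) / (1 - s)

/-- The Gaussian binomial coefficient `(d r)_s = [d]_s!/([r]_s! [d-r]_s!)`. -/
noncomputable def qBinom {F : Type*} [Field F] (s : F) (d r : ℕ) : F :=
  qFact s d / (qFact s r * qFact s (d - r))

/-- triangular numbers -/
def triAux : ℕ → ℕ
  | 0 => 0
  | n + 1 => triAux n + n

lemma triAux_add (a b : ℕ) : triAux (a + b) = triAux a + triAux b + a * b := by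
  induction b with
  | zero => simp [triAux]
  | succ n ih =>
      have h : a + (n + 1) = (a + n) + 1 := by omega
      rw [h, triAux, ih, triAux]
      ring

section Aux
variable {F : Type*} [Field F] (t : F)

lemma qPoch_t_ne_zero (ht : ∀ m : ℕ, 1 ≤ m → t ^ m ≠ 1) (m : ℕ) :
    qPoch t t m ≠ 0 := by
  unfold qPoch
  apply Finset.prod_ne_zero_iff.mpr
  intro i _
  rw [sub_ne_zero]
  intro h
  exact ht (i + 1) (by omega) (by rw [pow_succ']; exact h.symm)

lemma qPoch_succ (x : F) (m : ℕ) :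
    qPoch x t (m + 1) = qPoch x t m * (1 - x * t ^ m) := by
  unfold qPoch; rw [Finset.prod_range_succ]

lemma qPoch_t_add (a b : ℕ) :
    qPoch t t (a + b) = qPoch t t a * qPoch (t ^ (a + 1)) t b := by
  unfold qPoch
  rw [Finset.prod_range_add]
  congr 1
  apply Finset.prod_congr rfl
  intro i _
  congr 1
  ring

lemma qFact_inv_eq (ht0 : t ≠ 0) (ht : ∀ m : ℕ, 1 ≤ m → t ^ m ≠ 1) (m : ℕ) :
    qFact t⁻¹ m = qPoch t t m / (t ^ triAux m * (1 - t) ^ m) := by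
  have h1 : (1 : F) - t ≠ 0 := by
    rw [sub_ne_zero]; intro h; exact ht 1 le_rfl (by simpa using h.symm)
  induction m with
  | zero => simp [qFact, qPoch, triAux]
  | succ n ih =>
      have hinv : (1 : F) - t⁻¹ ≠ 0 := by
        rw [sub_ne_zero]; intro h
        exact ht 1 le_rfl (by simpa [eq_comm, inv_eq_one] using h)
      have htn : t ^ n ≠ 0 := pow_ne_zero _ ht0
      have hPn : qPoch t t n ≠ 0 := qPoch_t_ne_zero t ht n
      have htri : t ^ triAux n ≠ 0 := pow_ne_zero _ ht0
      unfold qFact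
      rw [Finset.prod_range_succ]
      have ihe : (∏ j ∈ Finset.range n, (1 - t⁻¹ ^ (j + 1)) / (1 - t⁻¹))
          = qPoch t t n / (t ^ triAux n * (1 - t) ^ n) := ih
      have hden : t ^ n * (1 - t) ≠ 0 := mul_ne_zero htn h1
      have key : (1 - t⁻¹ ^ (n + 1)) / (1 - t⁻¹)
          = (1 - t ^ (n + 1)) / (t ^ n * (1 - t)) := by
        rw [div_eq_div_iff hinv hden, inv_pow]
        field_simp
        ring
      rw [ihe, key, qPoch_succ, show triAux (n + 1) = triAux n + n from rfl]
      rw [div_mul_div_comm]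
      congr 1
      · ring
      · rw [pow_add, pow_succ]
        ring

lemma qBinom_inv_eq (ht0 : t ≠ 0) (ht : ∀ m : ℕ, 1 ≤ m → t ^ m ≠ 1) (a b : ℕ) :
    qBinom t⁻¹ (a + b) a
      = qPoch t t (a + b) / (t ^ (a * b) * (qPoch t t a * qPoch t t b)) := by
  have h1 : (1 : F) - t ≠ 0 := by
    rw [sub_ne_zero]; intro h; exact ht 1 le_rfl (by simpa using h.symm)
  have hPa := qPoch_t_ne_zero t ht a
  have hPb := qPoch_t_ne_zero t ht b
  have hPab := qPoch_t_ne_zero t ht (a + b)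
  have e1 : ∀ n : ℕ, (t:F) ^ n ≠ 0 := fun n => pow_ne_zero _ ht0
  unfold qBinom
  rw [Nat.add_sub_cancel_left, qFact_inv_eq t ht0 ht, qFact_inv_eq t ht0 ht,
    qFact_inv_eq t ht0 ht, triAux_add a b]
  field_simp
  ring

end Aux

theorem dim_fundamental_padic {F : Type*} [Field F] (t : F) (ht0 : t ≠ 0)
    (ht : ∀ m : ℕ, 1 ≤ m → t ^ m ≠ 1) (d r : ℕ) (hr : 1 ≤ r) (hrd : r ≤ d) :
    t ^ ((r : ℤ) * ((r : ℤ) - d)) * qPoch (t ^ (d - r + 2)) t r *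
        (1 - t ^ ((d : ℤ) - 2 * r + 1)) / (qPoch t t r * (1 - t ^ (d + 1)))
      = qBinom t⁻¹ d r - qBinom t⁻¹ d (r - 1) := by
  obtain ⟨k, rfl⟩ : ∃ k, d = r + k := ⟨d - r, by omega⟩
  obtain ⟨m, rfl⟩ : ∃ m, r = m + 1 := ⟨r - 1, by omega⟩
  have h1 : (1 : F) - t ≠ 0 := by
    rw [sub_ne_zero]; intro h; exact ht 1 le_rfl (by simpa using h.symm)
  have hone : ∀ n : ℕ, 1 ≤ n → (1 : F) - t ^ n ≠ 0 := by
    intro n hn; rw [sub_ne_zero]; exact fun h => ht n hn h.symm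
  have hpow : ∀ n : ℕ, (t : F) ^ n ≠ 0 := fun n => pow_ne_zero _ ht0
  -- clean up natural-number index arithmetic
  rw [show m + 1 + k - (m + 1) + 2 = k + 2 from by omega,
    show m + 1 - 1 = m from by omega]
  -- rewrite zpows as ratios of natural powers
  have hz1 : (t : F) ^ ((((m:ℕ) + 1 : ℕ) : ℤ) * ((((m:ℕ) + 1 : ℕ) : ℤ) - ((m + 1 + k : ℕ) : ℤ)))
      = (t ^ ((m + 1) * k))⁻¹ := by
    rw [show (((m:ℕ) + 1 : ℕ) : ℤ) * ((((m:ℕ) + 1 : ℕ) : ℤ) - ((m + 1 + k : ℕ) : ℤ))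
        = -(((m + 1) * k : ℕ) : ℤ) from by push_cast; ring, zpow_neg, zpow_natCast]
  have hz2 : (t : F) ^ (((m + 1 + k : ℕ) : ℤ) - 2 * (((m:ℕ) + 1 : ℕ) : ℤ) + 1)
      = t ^ k / t ^ m := by
    rw [show ((m + 1 + k : ℕ) : ℤ) - 2 * (((m:ℕ) + 1 : ℕ) : ℤ) + 1
        = ((k : ℕ) : ℤ) - ((m : ℕ) : ℤ) from by push_cast; ring,
      zpow_sub₀ ht0, zpow_natCast, zpow_natCast]
  rw [hz1, hz2]
  -- rewrite the Pochhammer with shifted argument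
  have hsplit : qPoch (t ^ (k + 2)) t (m + 1)
      = qPoch t t (m + 1 + k + 1) / qPoch t t (k + 1) := by
    have h := qPoch_t_add t (k + 1) (m + 1)
    rw [show k + 1 + (m + 1) = m + 1 + k + 1 from by omega,
      show k + 1 + 1 = k + 2 from rfl] at h
    rw [eq_div_iff (qPoch_t_ne_zero t ht (k + 1)), h]
    ring
  rw [hsplit]
  -- rewrite the two q-binomials
  rw [show qBinom t⁻¹ (m + 1 + k) (m + 1) = qBinom t⁻¹ ((m + 1) + k) (m + 1) from rfl,
    qBinom_inv_eq t ht0 ht (m + 1) k]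
  have hb2 : qBinom t⁻¹ (m + 1 + k) m
      = qPoch t t (m + (k + 1)) / (t ^ (m * (k + 1)) * (qPoch t t m * qPoch t t (k + 1))) := by
    have h := qBinom_inv_eq t ht0 ht m (k + 1)
    rw [show m + (k + 1) = m + 1 + k from by omega] at h
    rw [h, show m + (k + 1) = m + 1 + k from by omega]
  rw [hb2, show m + (k + 1) = m + 1 + k from by omega]
  -- expand single-step Pochhammers
  rw [show qPoch t t (m + 1 + k + 1) = qPoch t t (m + 1 + k) * (1 - t * t ^ (m + 1 + k)) from
      qPoch_succ t t (m + 1 + k),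
    show qPoch t t (m + 1) = qPoch t t m * (1 - t * t ^ m) from qPoch_succ t t m,
    show qPoch t t (k + 1) = qPoch t t k * (1 - t * t ^ k) from qPoch_succ t t k]
  have hPm := qPoch_t_ne_zero t ht m
  have hPk := qPoch_t_ne_zero t ht k
  have hPd := qPoch_t_ne_zero t ht (m + 1 + k)
  have hA : (1 : F) - t * t ^ m ≠ 0 := by
    rw [← pow_succ']; exact hone (m + 1) (by omega)
  have hB : (1 : F) - t * t ^ k ≠ 0 := by
    rw [← pow_succ']; exact hone (k + 1) (by omega)
  have hC : (1 : F) - t ^ (m + 1 + k + 1) ≠ 0 := hone _ (by omega)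
  have hC' : (1 : F) - t * t ^ (m + 1 + k) ≠ 0 := by
    rw [← pow_succ']; exact hC
  rw [show (1 : F) - t ^ (m + 1 + k + 1) = 1 - t * t ^ (m + 1 + k) from by rw [pow_succ']]
  rw [show (m + 1) * k = m * k + k from by ring,
    show m * (k + 1) = m * k + m from by ring,
    show (t : F) ^ (m * k + k) = t ^ (m * k) * t ^ k from pow_add t _ _,
    show (t : F) ^ (m * k + m) = t ^ (m * k) * t ^ m from pow_add t _ _,
    show (t : F) ^ (m + 1 + k) = t ^ m * t * t ^ k from by rw [pow_add, pow_add, pow_one]]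
  have hC2 : (1 : F) - t * (t ^ m * t * t ^ k) ≠ 0 := by
    rw [show (t : F) ^ m * t * t ^ k = t ^ (m + 1 + k) from by
      rw [pow_add, pow_add, pow_one]]
    exact hC'
  have hu : (t : F) ^ m ≠ 0 := hpow m
  have hv : (t : F) ^ k ≠ 0 := hpow k
  have hw : (t : F) ^ (m * k) ≠ 0 := hpow (m * k)
  rw [one_sub_div hu, inv_mul_eq_div, div_div, div_mul_div_comm, div_div,
    div_sub_div _ _ (by apply_rules [mul_ne_zero]) (by apply_rules [mul_ne_zero]),
    div_eq_div_iff (by apply_rules [mul_ne_zero]) (by apply_rules [mul_ne_zero])]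
  ring
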